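/- Let p ≥ 1 be a natural number, let e be an integer, and let x be a real number with 2^{e+1}(1 − 2^{−p−1}) ≤ x < 2^{e+1}(1 + 2^{−p}). Define the exponent-boundary bin size Δ = 3 · 2^{e−p} and the smoothed bin size Δ_s(x) = (|x|/√2) · 2^{1−p}. Then (2√2/3)(1 − 2^{−p−1}) ≤ Δ_s(x)/Δ ≤ (2√2/3)(1 + 2^{−p}), and both of these bounds lie in the interval [1/√2, √2]; consequently |log₂(Δ_s(x)/Δ)| ≤ 1/2. -/

import Mathlib

open Real

/-- Bin-size ratio bounds for the exponent-boundary bin. -/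
theorem exponent_boundary_bin_ratio_bound
    (p : ℕ) (hp : 1 ≤ p) (e : ℤ) (x : ℝ)
    (hx1 : (2:ℝ) ^ (e + 1) * (1 - (2:ℝ) ^ (-(p:ℤ) - 1)) ≤ x)
    (hx2 : x < (2:ℝ) ^ (e + 1) * (1 + (2:ℝ) ^ (-(p:ℤ))))
    (Δ : ℝ) (hΔ : Δ = 3 * (2:ℝ) ^ (e - (p:ℤ)))
    (Δs : ℝ) (hΔs : Δs = (|x| / Real.sqrt 2) * (2:ℝ) ^ (1 - (p:ℤ))) :
    ((2 * Real.sqrt 2 / 3) * (1 - (2:ℝ) ^ (-(p:ℤ) - 1)) ≤ Δs / Δ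
      ∧ Δs / Δ ≤ (2 * Real.sqrt 2 / 3) * (1 + (2:ℝ) ^ (-(p:ℤ))))
    ∧ (1 / Real.sqrt 2 ≤ (2 * Real.sqrt 2 / 3) * (1 - (2:ℝ) ^ (-(p:ℤ) - 1))
      ∧ (2 * Real.sqrt 2 / 3) * (1 - (2:ℝ) ^ (-(p:ℤ) - 1)) ≤ Real.sqrt 2)
    ∧ (1 / Real.sqrt 2 ≤ (2 * Real.sqrt 2 / 3) * (1 + (2:ℝ) ^ (-(p:ℤ)))
      ∧ (2 * Real.sqrt 2 / 3) * (1 + (2:ℝ) ^ (-(p:ℤ))) ≤ Real.sqrt 2)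
    ∧ |Real.logb 2 (Δs / Δ)| ≤ 1 / 2 := by
  set s := Real.sqrt 2 with hs
  have hs0 : 0 < s := Real.sqrt_pos.mpr (by norm_num)
  have hss : s * s = 2 := Real.mul_self_sqrt (by norm_num)
  clear_value s
  have ht0 : (0:ℝ) < (2:ℝ) ^ (-(p:ℤ) - 1) := zpow_pos (by norm_num) _
  have hu0 : (0:ℝ) < (2:ℝ) ^ (-(p:ℤ)) := zpow_pos (by norm_num) _
  have ht : (2:ℝ) ^ (-(p:ℤ) - 1) ≤ 1/4 := by
    calc (2:ℝ) ^ (-(p:ℤ) - 1) ≤ (2:ℝ) ^ (-2:ℤ) := by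
          apply zpow_le_zpow_right₀ (by norm_num) (by omega)
      _ = 1/4 := by norm_num
  have hu : (2:ℝ) ^ (-(p:ℤ)) ≤ 1/2 := by
    calc (2:ℝ) ^ (-(p:ℤ)) ≤ (2:ℝ) ^ (-1:ℤ) := by
          apply zpow_le_zpow_right₀ (by norm_num) (by omega)
      _ = 1/2 := by norm_num
  have hE : (0:ℝ) < (2:ℝ) ^ (e+1) := zpow_pos (by norm_num) _
  have hxpos : 0 < x := lt_of_lt_of_le (by nlinarith) hx1
  have habs : |x| = x := abs_of_pos hxpos
  have key : Δs / Δ = (2 * s / 3) * (x / (2:ℝ) ^ (e+1)) := by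
    rw [hΔs, hΔ, habs]
    have h1 : (2:ℝ) ^ (1 - (p:ℤ)) = (2:ℝ) ^ (e+1) * (2:ℝ) ^ (-e - (p:ℤ)) := by
      rw [← zpow_add₀ (by norm_num : (2:ℝ) ≠ 0)]; ring_nf
    have h2 : (2:ℝ) ^ (e - (p:ℤ)) = (2:ℝ) ^ (e+1) * ((2:ℝ) ^ (-e - (p:ℤ)) * (2:ℝ) ^ (e-1)) := by
      rw [← zpow_add₀ (by norm_num : (2:ℝ) ≠ 0), ← zpow_add₀ (by norm_num : (2:ℝ) ≠ 0)]; ring_nf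
    have hE2 : (0:ℝ) < (2:ℝ) ^ (-e - (p:ℤ)) := zpow_pos (by norm_num) _
    have hE3 : (0:ℝ) < (2:ℝ) ^ (e-1) := zpow_pos (by norm_num) _
    have h4 : (2:ℝ) ^ (e+1) * (2:ℝ) ^ (e-1) * 4 = ((2:ℝ) ^ (e+1)) * ((2:ℝ) ^ (e+1)) := by
      have h5 : (2:ℝ) ^ (e+1) = (2:ℝ) ^ (e-1) * 4 := by
        rw [show (e+1:ℤ) = (e-1) + 2 by ring, zpow_add₀ (by norm_num : (2:ℝ) ≠ 0)]
        norm_num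
      rw [h5]; ring
    rw [h1, h2]
    field_simp
    have h6 : (2:ℝ)^(e+1) = (2:ℝ)^(e-1)*4 :=
      mul_left_cancel₀ hE.ne' (by rw [← mul_assoc, h4])
    linear_combination h6 - 2*(2:ℝ)^(e-1)*hss
  have hr1 : 1 - (2:ℝ) ^ (-(p:ℤ) - 1) ≤ x / (2:ℝ) ^ (e+1) := by
    rw [le_div_iff₀ hE]; linarith [hx1]
  have hr2 : x / (2:ℝ) ^ (e+1) ≤ 1 + (2:ℝ) ^ (-(p:ℤ)) := by
    rw [div_le_iff₀ hE]; nlinarith [hx2]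
  have hc : 0 ≤ 2 * s / 3 := by positivity
  have main1 : (2 * s / 3) * (1 - (2:ℝ) ^ (-(p:ℤ) - 1)) ≤ Δs / Δ := by
    rw [key]; exact mul_le_mul_of_nonneg_left hr1 hc
  have main2 : Δs / Δ ≤ (2 * s / 3) * (1 + (2:ℝ) ^ (-(p:ℤ))) := by
    rw [key]; exact mul_le_mul_of_nonneg_left hr2 hc
  have b1 : 1 / s ≤ (2 * s / 3) * (1 - (2:ℝ) ^ (-(p:ℤ) - 1)) := by
    rw [div_le_iff₀ hs0]; nlinarith
  have b2 : (2 * s / 3) * (1 - (2:ℝ) ^ (-(p:ℤ) - 1)) ≤ s := by nlinarith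
  have b3 : 1 / s ≤ (2 * s / 3) * (1 + (2:ℝ) ^ (-(p:ℤ))) := by
    rw [div_le_iff₀ hs0]; nlinarith
  have b4 : (2 * s / 3) * (1 + (2:ℝ) ^ (-(p:ℤ))) ≤ s := by nlinarith
  refine ⟨⟨main1, main2⟩, ⟨b1, b2⟩, ⟨b3, b4⟩, ?_⟩
  have hl : 1 / s ≤ Δs / Δ := b1.trans main1
  have hh : Δs / Δ ≤ s := main2.trans b4
  have hrp : 0 < Δs / Δ := lt_of_lt_of_le (by positivity) hl
  have hlogs : Real.logb 2 s = 1 / 2 := by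
    rw [hs, Real.sqrt_eq_rpow]
    exact Real.logb_rpow (by norm_num) (by norm_num)
  have hlogi : Real.logb 2 (1 / s) = -(1 / 2) := by
    rw [one_div, Real.logb_inv, hlogs]
  rw [abs_le]
  constructor
  · rw [← hlogi]
    exact Real.logb_le_logb_of_le (by norm_num) (by positivity) hl
  · rw [← hlogs]
    exact Real.logb_le_logb_of_le (by norm_num) hrp hh
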